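/- For any three permutations σ_0, σ_1, σ_∞ in S_d with σ_0 σ_1 σ_∞ = id generating a transitive subgroup, the integer g determined by 2 - 2g = c(σ_0) + c(σ_1) + c(σ_∞) - d, where c(σ) is the number of cycles of σ, satisfies g ≥ 0 (equivalently c(σ_0) + c(σ_1) + c(σ_∞) ≤ d + 2). -/

import Mathlib

open Equiv Equiv.Perm Function

set_option linter.unusedSectionVars false

theorem Equiv.Perm.apply_inv_self {α : Type*} (f : Equiv.Perm α) (x : α) : f (f⁻¹ x) = x :=
  f.apply_symm_apply x

theorem Equiv.Perm.inv_apply_self {α : Type*} (f : Equiv.Perm α) (x : α) : f⁻¹ (f x) = x :=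
  f.symm_apply_apply x

section Counting

variable {X : Type*} [Finite X]

/-- classes count of a setoid -/
noncomputable def nCl (r : Setoid X) : ℕ := Nat.card (Quotient r)

lemma nCl_le_of_le {r s : Setoid X} (h : ∀ x y, r.r x y → s.r x y) :
    nCl s ≤ nCl r := by
  have hs : Function.Surjective (Quotient.map' (id : X → X) h :
      Quotient r → Quotient s) := by
    rintro ⟨x⟩
    exact ⟨Quotient.mk'' x, rfl⟩
  exact Nat.card_le_card_of_surjective _ hs

lemma nCl_lt_of_le {r s : Setoid X} (h : ∀ x y, r.r x y → s.r x y)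
    {a b : X} (hab : ¬ r.r a b) (hab' : s.r a b) :
    nCl s + 1 ≤ nCl r := by
  classical
  cases nonempty_fintype X
  let f : Quotient r → Quotient s := Quotient.map' (id : X → X) h
  have hs : Function.Surjective f := by
    rintro ⟨x⟩
    exact ⟨Quotient.mk'' x, rfl⟩
  have hni : ¬ Function.Injective f := by
    intro hinj
    have : (Quotient.mk'' a : Quotient r) = Quotient.mk'' b := by
      apply hinj
      exact Quotient.sound' hab'
    exact hab (Quotient.exact' this)
  have := Fintype.card_lt_of_surjective_not_injective f hs hni
  have h1 : nCl s = Fintype.card (Quotient s) := Nat.card_eq_fintype_card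
  have h2 : nCl r = Fintype.card (Quotient r) := Nat.card_eq_fintype_card
  omega

lemma nCl_le_card (r : Setoid X) : nCl r ≤ Nat.card X :=
  Nat.card_le_card_of_surjective _ Quotient.mk''_surjective

lemma nCl_congr {r s : Setoid X} (h : ∀ x y, r.r x y ↔ s.r x y) : nCl r = nCl s :=
  le_antisymm (nCl_le_of_le fun x y => (h x y).2) (nCl_le_of_le fun x y => (h x y).1)

/-- merge the classes of `a` and `b` -/
def mergeS (r : Setoid X) (a b : X) : Setoid X where
  r x y := r.r x y ∨ (r.r x a ∧ r.r b y) ∨ (r.r x b ∧ r.r a y)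
  iseqv := by
    constructor
    · exact fun x => Or.inl (r.refl x)
    · rintro x y (h | ⟨h1, h2⟩ | ⟨h1, h2⟩)
      · exact Or.inl (r.symm h)
      · exact Or.inr (Or.inr ⟨r.symm h2, r.symm h1⟩)
      · exact Or.inr (Or.inl ⟨r.symm h2, r.symm h1⟩)
    · rintro x y z (h | ⟨h1, h2⟩ | ⟨h1, h2⟩) (h' | ⟨h1', h2'⟩ | ⟨h1', h2'⟩)
      · exact Or.inl (r.trans h h')
      · exact Or.inr (Or.inl ⟨r.trans h h1', h2'⟩)
      · exact Or.inr (Or.inr ⟨r.trans h h1', h2'⟩)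
      · exact Or.inr (Or.inl ⟨h1, r.trans h2 h'⟩)
      · exact Or.inl (r.trans h1 (r.trans (r.symm (r.trans h2 h1')) h2'))
      · exact Or.inl (r.trans h1 h2')
      · exact Or.inr (Or.inr ⟨h1, r.trans h2 h'⟩)
      · exact Or.inl (r.trans h1 h2')
      · exact Or.inl (r.trans h1 (r.trans (r.symm (r.trans h2 h1')) h2'))

lemma le_mergeS (r : Setoid X) (a b : X) : ∀ x y, r.r x y → (mergeS r a b).r x y :=
  fun _ _ h => Or.inl h

lemma mergeS_rel (r : Setoid X) (a b : X) : (mergeS r a b).r a b :=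
  Or.inr (Or.inl ⟨r.refl a, r.refl b⟩)

lemma mergeS_eq_of_rel {r : Setoid X} {a b : X} (h : r.r a b) :
    ∀ x y, (mergeS r a b).r x y ↔ r.r x y := by
  intro x y
  constructor
  · rintro (hh | ⟨h1, h2⟩ | ⟨h1, h2⟩)
    · exact hh
    · exact r.trans h1 (r.trans h h2)
    · exact r.trans h1 (r.trans (r.symm h) h2)
  · exact fun hh => Or.inl hh

/-- merging loses at most one class -/
lemma nCl_le_mergeS (r : Setoid X) (a b : X) : nCl r ≤ nCl (mergeS r a b) + 1 := by
  classical
  set m := mergeS r a b with hm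
  let f : Quotient m ⊕ Unit → Quotient r := fun z =>
    match z with
    | .inl c => Quotient.mk r c.out
    | .inr _ => if r.r (Quotient.out (Quotient.mk m a)) a then Quotient.mk r b
                else Quotient.mk r a
  have hf : Function.Surjective f := by
    rintro ⟨x⟩
    have hout : m.r (Quotient.out (Quotient.mk m x)) x := Quotient.mk_out x
    rcases hout with h | ⟨h1, h2⟩ | ⟨h1, h2⟩
    · exact ⟨.inl (Quotient.mk m x), Quotient.sound h⟩
    · -- out ~r a, b ~r x : the class of x is [b]
      have hax : (Quotient.mk m a) = (Quotient.mk m x) :=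
        Quotient.sound (Or.inr (Or.inl ⟨r.refl a, h2⟩))
      refine ⟨.inr (), ?_⟩
      show (if r.r (Quotient.out (Quotient.mk m a)) a then Quotient.mk r b
              else Quotient.mk r a) = _
      rw [hax, if_pos h1]
      exact Quotient.sound h2
    · -- out ~r b, a ~r x
      by_cases hox : r.r (Quotient.out (Quotient.mk m x)) x
      · exact ⟨.inl (Quotient.mk m x), Quotient.sound hox⟩
      · have hax : (Quotient.mk m a) = (Quotient.mk m x) := Quotient.sound (Or.inl h2)
        refine ⟨.inr (), ?_⟩
        show (if r.r (Quotient.out (Quotient.mk m a)) a then Quotient.mk r b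
                else Quotient.mk r a) = _
        rw [hax, if_neg, ]
        · exact Quotient.sound h2
        · intro hcon
          exact hox (r.trans hcon h2)
  calc nCl r ≤ Nat.card (Quotient m ⊕ Unit) := Nat.card_le_card_of_surjective f hf
    _ = nCl m + 1 := by simp [Nat.card_sum, nCl]

end Counting

set_option maxHeartbeats 1000000


section PermSetoids

variable {d : ℕ}

/-- setoid of the same-cycle relation -/
def scS (σ : Perm (Fin d)) : Setoid (Fin d) :=
  ⟨σ.SameCycle, ⟨fun _ => Equiv.Perm.SameCycle.refl σ _, Equiv.Perm.SameCycle.symm,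
    Equiv.Perm.SameCycle.trans⟩⟩

/-- orbit setoid of the subgroup generated by a set of permutations -/
def orbS (G : Set (Perm (Fin d))) : Setoid (Fin d) where
  r x y := ∃ π ∈ Subgroup.closure G, π x = y
  iseqv := by
    constructor
    · exact fun x => ⟨1, one_mem _, rfl⟩
    · rintro x y ⟨π, hπ, rfl⟩
      exact ⟨π⁻¹, inv_mem hπ, π.inv_apply_self x⟩
    · rintro x y z ⟨π, hπ, rfl⟩ ⟨ρ, hρ, rfl⟩
      exact ⟨ρ * π, mul_mem hρ hπ, rfl⟩

lemma scS_le_orbS {σ : Perm (Fin d)} {G : Set (Perm (Fin d))} (hσ : σ ∈ G) :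
    ∀ x y, (scS σ).r x y → (orbS G).r x y := by
  rintro x y ⟨i, rfl⟩
  exact ⟨σ ^ i, zpow_mem (Subgroup.subset_closure hσ) i, rfl⟩

lemma orbS_le_of_subset {G G' : Set (Perm (Fin d))} (h : G ⊆ ↑(Subgroup.closure G')) :
    ∀ x y, (orbS G).r x y → (orbS G').r x y := by
  rintro x y ⟨π, hπ, rfl⟩
  have : Subgroup.closure G ≤ Subgroup.closure G' := (Subgroup.closure_le _).2 h
  exact ⟨π, this hπ, rfl⟩

lemma orbS_singleton (σ : Perm (Fin d)) :
    ∀ x y, (orbS {σ}).r x y ↔ (scS σ).r x y := by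
  intro x y
  constructor
  · rintro ⟨π, hπ, rfl⟩
    rw [← Subgroup.zpowers_eq_closure] at hπ
    obtain ⟨i, rfl⟩ := Subgroup.mem_zpowers_iff.1 hπ
    exact ⟨i, rfl⟩
  · exact scS_le_orbS (Set.mem_singleton σ) x y

/-- `nC σ` : the number of cycles of `σ`, as classes of the same-cycle relation. -/
noncomputable def nC (σ : Perm (Fin d)) : ℕ := nCl (scS σ)

/-- `nOrb G` : the number of orbits of the subgroup generated by `G`. -/
noncomputable def nOrb (G : Set (Perm (Fin d))) : ℕ := nCl (orbS G)

/-- a fixed point forms a singleton class -/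
lemma sameCycle_fixed {σ : Perm (Fin d)} {a x : Fin d} (ha : σ a = a)
    (h : σ.SameCycle a x) : x = a := by
  obtain ⟨i, rfl⟩ := h
  exact zpow_apply_eq_self_of_apply_eq_self ha i

/-- pointwise step inclusion: if each `σ`-step stays in an `R`-class, the
same-cycle relation of `σ` is contained in `R`. -/
lemma sc_le_of_step {σ : Perm (Fin d)} {R : Setoid (Fin d)}
    (h : ∀ x, R.r x (σ x)) : ∀ x y, (scS σ).r x y → R.r x y := by
  have key : ∀ (n : ℕ) (x : Fin d), R.r x ((σ ^ n) x) := by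
    intro n
    induction n with
    | zero => exact fun x => R.refl x
    | succ n ih =>
      intro x
      have hsplit : (σ ^ (n + 1)) x = (σ ^ n) (σ x) := by
        rw [pow_succ, Equiv.Perm.mul_apply]
      rw [hsplit]
      exact R.trans (h x) (ih (σ x))
  rintro x y hxy
  obtain ⟨i, hi, rfl⟩ := Equiv.Perm.SameCycle.exists_pow_eq' hxy
  exact key i x

/-- the orbit setoid of `insert (swap a b) G` is the merge of the orbit setoid
of `G` at `a` and `b`. -/
lemma orbS_insert_swap (G : Set (Perm (Fin d))) (a b : Fin d) :
    ∀ x y, (orbS (insert (Equiv.swap a b) G)).r x y ↔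
      (mergeS (orbS G) a b).r x y := by
  intro x y
  constructor
  · rintro ⟨π, hπ, rfl⟩
    induction hπ using Subgroup.closure_induction generalizing x with
    | mem g hg =>
      rcases hg with rfl | hg
      · -- g = swap a b
        rcases eq_or_ne x a with rfl | hxa
        · rw [Equiv.swap_apply_left]
          exact Or.inr (Or.inl ⟨(orbS G).refl x, (orbS G).refl b⟩)
        · rcases eq_or_ne x b with rfl | hxb
          · rw [Equiv.swap_apply_right]
            exact Or.inr (Or.inr ⟨(orbS G).refl x, (orbS G).refl a⟩)
          · rw [Equiv.swap_apply_of_ne_of_ne hxa hxb]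
            try exact (mergeS (orbS G) a b).refl x
      · exact Or.inl ⟨g, Subgroup.subset_closure hg, rfl⟩
    | one =>
      show (mergeS (orbS G) a b).r x ((1 : Perm (Fin d)) x)
      exact (mergeS (orbS G) a b).refl x
    | mul g₁ g₂ hg₁ hg₂ ih₁ ih₂ =>
      have h1 : (mergeS (orbS G) a b).r x (g₂ x) := ih₂ x
      have h2 : (mergeS (orbS G) a b).r (g₂ x) (g₁ (g₂ x)) := ih₁ (g₂ x)
      show (mergeS (orbS G) a b).r x ((g₁ * g₂) x)
      rw [Equiv.Perm.mul_apply]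
      exact (mergeS (orbS G) a b).trans h1 h2
    | inv g hg ih =>
      have h0 := ih (g⁻¹ x)
      rw [Equiv.Perm.apply_inv_self] at h0
      exact (mergeS (orbS G) a b).symm h0
  · have hGsub : ∀ u v, (orbS G).r u v → (orbS (insert (Equiv.swap a b) G)).r u v :=
      orbS_le_of_subset (fun g hg => Subgroup.subset_closure (Set.mem_insert_of_mem _ hg))
    have hab : (orbS (insert (Equiv.swap a b) G)).r a b :=
      ⟨Equiv.swap a b, Subgroup.subset_closure (Set.mem_insert _ _), Equiv.swap_apply_left a b⟩
    rintro (h | ⟨h1, h2⟩ | ⟨h1, h2⟩)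
    · exact hGsub _ _ h
    · exact (orbS _).trans (hGsub _ _ h1) ((orbS _).trans hab (hGsub _ _ h2))
    · exact (orbS _).trans (hGsub _ _ h1) ((orbS _).trans ((orbS _).symm hab) (hGsub _ _ h2))

end PermSetoids
section CoreLemmas

variable {d : ℕ}

/-- the identity setoid has `d` classes -/
def eqS : Setoid (Fin d) := ⟨Eq, ⟨fun _ => rfl, Eq.symm, Eq.trans⟩⟩

lemma nCl_eqS : nCl (eqS : Setoid (Fin d)) = d := by
  have hbij : Function.Bijective (Quotient.mk (eqS : Setoid (Fin d))) := by
    constructor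
    · intro x y h
      exact Quotient.exact h
    · rintro ⟨x⟩
      exact ⟨x, rfl⟩
  have := Nat.card_congr (Equiv.ofBijective _ hbij)
  simp only [Nat.card_eq_fintype_card, Fintype.card_fin] at this
  simpa [nCl] using this.symm

lemma nC_le (σ : Perm (Fin d)) : nC σ ≤ d := by
  have := nCl_le_card (scS σ)
  simpa [nC, Nat.card_eq_fintype_card] using this

lemma nC_lt_of_moved {β : Perm (Fin d)} {y : Fin d} (hy : β y ≠ y) :
    nC β + 1 ≤ d := by
  have h := nCl_lt_of_le (r := (eqS : Setoid (Fin d))) (s := scS β)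
    (fun x z hxz => hxz ▸ (scS β).refl x) (a := y) (b := β y)
    (fun hc => hy hc.symm) ⟨1, by simp⟩
  rwa [nCl_eqS] at h

lemma nC_one : nC (1 : Perm (Fin d)) = d := by
  have : ∀ x y : Fin d, (scS (1 : Perm (Fin d))).r x y ↔ (eqS : Setoid (Fin d)).r x y := by
    intro x y
    constructor
    · intro h
      rcases h with ⟨i, hi⟩
      exact (by simpa using hi : x = y)
    · rintro rfl
      exact ⟨1, by simp⟩
  rw [nC, nCl_congr this, nCl_eqS]

/-- pointwise: each step of `σ * swap a b` stays within merged σ-classes -/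
lemma step_mul_swap (σ : Perm (Fin d)) (a b : Fin d) :
    ∀ x, (mergeS (scS σ) a b).r x ((σ * Equiv.swap a b) x) := by
  intro x
  by_cases hxa : x = a
  · subst hxa
    have h1 : (σ * Equiv.swap x b) x = σ b := by simp
    rw [h1]
    exact (mergeS (scS σ) x b).trans (mergeS_rel _ _ _) (Or.inl ⟨1, by simp⟩)
  · by_cases hxb : x = b
    · subst hxb
      have h1 : (σ * Equiv.swap a x) x = σ a := by simp
      rw [h1]
      exact (mergeS (scS σ) a x).trans ((mergeS (scS σ) a x).symm (mergeS_rel _ _ _))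
        (Or.inl ⟨1, by simp⟩)
    · have : (σ * Equiv.swap a b) x = σ x := by
        simp [Equiv.swap_apply_of_ne_of_ne hxa hxb]
      rw [this]
      exact Or.inl ⟨1, by simp⟩

/-- Lemma A: multiplying by a transposition creates at most one new cycle -/
lemma nC_mul_swap_ge (σ : Perm (Fin d)) (a b : Fin d) :
    nC σ ≤ nC (σ * Equiv.swap a b) + 1 := by
  have hle : ∀ x y, (scS (σ * Equiv.swap a b)).r x y → (mergeS (scS σ) a b).r x y :=
    sc_le_of_step (step_mul_swap σ a b)
  calc nC σ ≤ nCl (mergeS (scS σ) a b) + 1 := nCl_le_mergeS _ a b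
    _ ≤ nC (σ * Equiv.swap a b) + 1 := by
        exact Nat.add_le_add_right (nCl_le_of_le hle) 1

/-- Lemma B: if `a` and `b` are in different cycles of `σ`, multiplying by
`swap a b` joins them: the cycle count drops. -/
lemma nC_mul_swap_lt {σ : Perm (Fin d)} {a b : Fin d}
    (hab : ¬ σ.SameCycle a b) :
    nC (σ * Equiv.swap a b) + 1 ≤ nC σ := by
  have hne : a ≠ b := fun h => hab (h ▸ Equiv.Perm.SameCycle.refl σ a)
  set τ := σ * Equiv.swap a b with hτ
  have hτb : τ b = σ a := by simp [hτ]
  have hτa : τ a = σ b := by simp [hτ]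
  -- (i) a and b are in the same cycle of τ
  have hkey : ∀ k : ℕ, τ.SameCycle b a ∨ τ.SameCycle b ((σ ^ (k + 1)) a) := by
    intro k
    induction k with
    | zero =>
      right
      have : (σ ^ 1) a = τ b := by simpa using hτb.symm
      rw [this]
      exact ⟨1, by simp⟩
    | succ k ih =>
      rcases ih with h | h
      · exact Or.inl h
      · rcases eq_or_ne ((σ ^ (k + 1)) a) a with he | hne'
        · exact Or.inl (he ▸ h)
        · have hneb : (σ ^ (k + 1)) a ≠ b := by
            intro hc
            exact hab ⟨(k + 1 : ℕ), hc⟩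
          right
          have hstep : τ ((σ ^ (k + 1)) a) = (σ ^ (k + 2)) a := by
            rw [hτ, Equiv.Perm.mul_apply, Equiv.swap_apply_of_ne_of_ne hne' hneb]
            rw [show (σ ^ (k + 2)) = σ * σ ^ (k+1) by rw [← pow_succ']]
            simp [Equiv.Perm.mul_apply]
          exact h.trans ⟨1, by simpa using hstep⟩
  have hba : τ.SameCycle b a := by
    rcases hkey (orderOf σ - 1) with h | h
    · exact h
    · have ho : orderOf σ - 1 + 1 = orderOf σ := Nat.succ_pred_eq_of_pos (orderOf_pos σ)
      rw [ho, pow_orderOf_eq_one] at h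
      simpa using h
  have hab' : τ.SameCycle a b := hba.symm
  -- (ii) each σ-step stays within a τ-cycle
  have hstep : ∀ x, (scS τ).r x (σ x) := by
    intro x
    rcases eq_or_ne x a with rfl | hxa
    · have : σ x = τ b := hτb.symm
      rw [this]
      exact hab'.trans ⟨1, by simp⟩
    · rcases eq_or_ne x b with rfl | hxb
      · have : σ x = τ a := hτa.symm
        rw [this]
        exact hba.trans ⟨1, by simp⟩
      · have : σ x = τ x := by
          rw [hτ, Equiv.Perm.mul_apply, Equiv.swap_apply_of_ne_of_ne hxa hxb]
        rw [this]
        exact ⟨1, by simp⟩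
  have hle : ∀ x y, (scS σ).r x y → (scS τ).r x y := sc_le_of_step hstep
  exact nCl_lt_of_le hle hab hab'

/-- Lemma C: cutting a non-fixed point out of its cycle increases the count -/
lemma nC_cut {β : Perm (Fin d)} {a : Fin d} (ha : β a ≠ a) :
    nC β + 1 ≤ nC (β * Equiv.swap (β⁻¹ a) a) := by
  set c := β⁻¹ a with hc
  have hca : c ≠ a := by
    intro h
    have h2 := congrArg β h
    rw [hc, Equiv.Perm.apply_inv_self] at h2
    exact ha h2.symm
  set β' := β * Equiv.swap c a with hβ'
  have hβ'a : β' a = a := by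
    rw [hβ', Equiv.Perm.mul_apply, Equiv.swap_apply_right, hc, Equiv.Perm.apply_inv_self]
  have hnsc : ¬ β'.SameCycle c a := by
    intro h
    exact hca (sameCycle_fixed hβ'a h.symm)
  have hback : β' * Equiv.swap c a = β := by
    rw [hβ', mul_assoc, Equiv.swap_mul_self, mul_one]
  have := nC_mul_swap_lt hnsc
  rwa [hback] at this

end CoreLemmas
section MainInduction

variable {d : ℕ}

lemma nOrb_le_of_subset {G G' : Set (Perm (Fin d))} (h : G ⊆ ↑(Subgroup.closure G')) :
    nOrb G' ≤ nOrb G :=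
  nCl_le_of_le (orbS_le_of_subset h)

lemma nOrb_insert_swap_eq {G : Set (Perm (Fin d))} {a b : Fin d}
    (h : (orbS G).r a b) :
    nOrb (insert (Equiv.swap a b) G) = nOrb G := by
  apply nCl_congr
  intro x y
  rw [orbS_insert_swap G a b x y, mergeS_eq_of_rel h]

lemma nOrb_le_insert_swap (G : Set (Perm (Fin d))) (a b : Fin d) :
    nOrb G ≤ nOrb (insert (Equiv.swap a b) G) + 1 := by
  have h1 : nOrb (insert (Equiv.swap a b) G) = nCl (mergeS (orbS G) a b) :=
    nCl_congr (fun x y => orbS_insert_swap G a b x y)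
  rw [h1]
  exact nCl_le_mergeS (orbS G) a b

lemma main_base (α : Perm (Fin d)) :
    nC α + nC (1 : Perm (Fin d)) + nC (α * 1) ≤ d + 2 * nOrb {α, (1 : Perm (Fin d))} := by
  have h1 : nOrb {α, (1 : Perm (Fin d))} = nC α := by
    have hiff : ∀ x y, (orbS {α, (1 : Perm (Fin d))}).r x y ↔ (scS α).r x y := by
      intro x y
      constructor
      · intro h
        rw [← orbS_singleton α x y]
        refine orbS_le_of_subset ?_ x y h
        rintro g (rfl | hg)
        · exact Subgroup.subset_closure rfl
        · rw [Set.mem_singleton_iff] at hg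
          rw [hg]
          exact SetLike.mem_coe.2 (one_mem _)
      · intro h
        rw [← orbS_singleton α x y] at h
        refine orbS_le_of_subset ?_ x y h
        rintro g (rfl : g = α)
        exact Subgroup.subset_closure (Set.mem_insert _ _)
    rw [nOrb, nCl_congr hiff, nC]
  rw [mul_one, nC_one, h1]
  omega

lemma main_ind (N : ℕ) : ∀ α β : Perm (Fin d), d ≤ nC β + N →
    nC α + nC β + nC (α * β) ≤ d + 2 * nOrb {α, β} := by
  induction N with
  | zero =>
    intro α β hm
    by_cases hβ : β = 1
    · subst hβ
      exact main_base α
    · exfalso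
      obtain ⟨y, hy⟩ : ∃ y, β y ≠ y := by
        by_contra hc
        push_neg at hc
        exact hβ (Equiv.ext fun x => by rw [hc x, Equiv.Perm.one_apply])
      have := nC_lt_of_moved hy
      omega
  | succ N ih =>
    intro α β hm
    by_cases hβ : β = 1
    · subst hβ
      exact main_base α
    · obtain ⟨y, hy⟩ : ∃ y, β y ≠ y := by
        by_contra hc
        push_neg at hc
        exact hβ (Equiv.ext fun x => by rw [hc x, Equiv.Perm.one_apply])
      set t := Equiv.swap y (β y) with ht
      set α' := α * t with hα'
      set β' := β * Equiv.swap (β⁻¹ y) y with hβ'def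
      have hβ'' : β' = t * β := by
        rw [hβ'def, ht]
        rw [Equiv.mul_swap_eq_swap_mul β (β⁻¹ y) y, Equiv.Perm.apply_inv_self]
      have htt : t * t = 1 := by rw [ht]; exact Equiv.swap_mul_self y (β y)
      have hαα : α' * t = α := by rw [hα', mul_assoc, htt, mul_one]
      have hββ : t * β' = β := by rw [hβ'', ← mul_assoc, htt, one_mul]
      have hprod : α' * β' = α * β := by
        rw [hβ'', hα', mul_assoc, ← mul_assoc t t β, htt, one_mul]
      have hC : nC β + 1 ≤ nC β' := nC_cut hy
      have hβ'le : nC β' ≤ d := nC_le β'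
      have hmeas : d ≤ nC β' + N := by omega
      have hIH := ih α' β' hmeas
      rw [hprod] at hIH
      -- {α, β} is contained in the closure of insert t {α', β'}
      have hsub : ({α, β} : Set (Perm (Fin d))) ⊆
          ↑(Subgroup.closure (insert t {α', β'})) := by
        rintro g (rfl | hg)
        · rw [← hαα]
          exact SetLike.mem_coe.2 (mul_mem
            (Subgroup.subset_closure (Set.mem_insert_of_mem _ (Set.mem_insert _ _)))
            (Subgroup.subset_closure (Set.mem_insert _ _)))
        · rw [Set.mem_singleton_iff] at hg
          rw [hg, ← hββ]
          exact SetLike.mem_coe.2 (mul_mem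
            (Subgroup.subset_closure (Set.mem_insert _ _))
            (Subgroup.subset_closure (Set.mem_insert_of_mem _
              (Set.mem_insert_of_mem _ rfl))))
      have horb2 : nOrb (insert t {α', β'}) ≤ nOrb {α, β} := nOrb_le_of_subset hsub
      by_cases hcase : (orbS {α', β'}).r y (β y)
      · -- good case
        have horb : nOrb (insert t {α', β'}) = nOrb {α', β'} := by
          rw [ht]
          exact nOrb_insert_swap_eq hcase
        have hA : nC α ≤ nC α' + 1 := by
          rw [hα', ht]
          exact nC_mul_swap_ge α y (β y)
        omega
      · -- bad case
        have hnsc : ¬ α'.SameCycle y (β y) := by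
          intro hsc
          exact hcase (scS_le_orbS (Set.mem_insert _ _) y (β y) hsc)
        have hB : nC α + 1 ≤ nC α' := by
          have := nC_mul_swap_lt hnsc
          rw [← ht, hαα] at this
          exact this
        have horb1 : nOrb {α', β'} ≤ nOrb (insert t {α', β'}) + 1 := by
          rw [ht]
          exact nOrb_le_insert_swap _ y (β y)
        omega

end MainInduction
/-- The number of cycles of a permutation, including fixed points. -/
def cyclesCount {d : ℕ} (σ : Equiv.Perm (Fin d)) : ℕ :=
  σ.cycleType.card + (Finset.univ.filter fun x : Fin d => σ x = x).card
section Bridge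

variable {d : ℕ}

lemma cyclesCount_eq_nC (σ : Perm (Fin d)) : cyclesCount σ = nC σ := by
  classical
  -- the map from the quotient to cycle factors ⊕ fixed points
  let f : Fin d → (↥σ.cycleFactorsFinset ⊕ {x : Fin d // σ x = x}) := fun x =>
    if h : σ x = x then Sum.inr ⟨x, h⟩
    else Sum.inl ⟨σ.cycleOf x, Equiv.Perm.cycleOf_mem_cycleFactorsFinset_iff.2
      (Equiv.Perm.mem_support.2 h)⟩
  have hresp : ∀ x y, (scS σ).r x y → f x = f y := by
    intro x y hxy
    by_cases hx : σ x = x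
    · have : y = x := sameCycle_fixed hx hxy
      subst this
      rfl
    · by_cases hy : σ y = y
      · exact absurd (sameCycle_fixed hy hxy.symm) fun h => hx (h ▸ hy)
      · have hco : σ.cycleOf x = σ.cycleOf y := Equiv.Perm.SameCycle.cycleOf_eq hxy
        simp only [f, dif_neg hx, dif_neg hy]
        exact congrArg Sum.inl (Subtype.ext hco)
  let F : Quotient (scS σ) → (↥σ.cycleFactorsFinset ⊕ {x : Fin d // σ x = x}) :=
    Quotient.lift f hresp
  have hinj : Function.Injective F := by
    rintro ⟨x⟩ ⟨y⟩ hxy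
    apply Quotient.sound
    show σ.SameCycle x y
    by_cases hx : σ x = x
    · by_cases hy : σ y = y
      · have : f x = f y := hxy
        simp only [f, dif_pos hx, dif_pos hy] at this
        obtain ⟨rfl⟩ := Sum.inr.inj this
        exact Equiv.Perm.SameCycle.refl σ x
      · have : f x = f y := hxy
        simp only [f, dif_pos hx, dif_neg hy] at this
        exact absurd this (by simp)
    · by_cases hy : σ y = y
      · have : f x = f y := hxy
        simp only [f, dif_neg hx, dif_pos hy] at this
        exact absurd this (by simp)
      · have : f x = f y := hxy
        simp only [f, dif_neg hx, dif_neg hy] at this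
        have hco : σ.cycleOf x = σ.cycleOf y :=
          congrArg Subtype.val (Sum.inl.inj this)
        have hy' : y ∈ (σ.cycleOf y).support :=
          Equiv.Perm.mem_support_cycleOf_iff.2
            ⟨Equiv.Perm.SameCycle.refl σ y, Equiv.Perm.mem_support.2 hy⟩
        rw [← hco] at hy'
        exact (Equiv.Perm.mem_support_cycleOf_iff.1 hy').1
  have hsurj : Function.Surjective F := by
    rintro (⟨c, hc⟩ | ⟨x, hx⟩)
    · have hcyc : c.IsCycle := (Equiv.Perm.mem_cycleFactorsFinset_iff.1 hc).1
      obtain ⟨x, hx, -⟩ := hcyc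
      have hxs : x ∈ c.support := Equiv.Perm.mem_support.2 hx
      have hcx : c = σ.cycleOf x :=
        (Equiv.Perm.eq_cycleOf_of_mem_cycleFactorsFinset_iff σ c hc x).2 hxs
      have hσx : σ x ≠ x := by
        have := (Equiv.Perm.mem_cycleFactorsFinset_iff.1 hc).2 x hxs
        rw [← this]
        exact hx
      refine ⟨Quotient.mk _ x, ?_⟩
      show f x = _
      simp only [f, dif_neg hσx]
      exact congrArg Sum.inl (Subtype.ext hcx.symm)
    · refine ⟨Quotient.mk _ x, ?_⟩
      show f x = _
      simp only [f, dif_pos hx]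
  have hcard : nC σ = σ.cycleFactorsFinset.card +
      (Finset.univ.filter fun x : Fin d => σ x = x).card := by
    have := Nat.card_congr (Equiv.ofBijective F ⟨hinj, hsurj⟩)
    rw [nC, nCl, this, Nat.card_sum]
    congr 1
    · rw [Nat.card_eq_fintype_card, Fintype.card_coe]
    · rw [Nat.card_eq_fintype_card, Fintype.card_subtype]
  have hct : σ.cycleType.card = σ.cycleFactorsFinset.card := by
    rw [Equiv.Perm.cycleType_def, Multiset.card_map]
    rfl
  rw [cyclesCount, hct, hcard]

end Bridge
/-- a connected hypermap has nonnegative genus: if `σ₀σ₁σ∞ = 1` and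
`⟨σ₀,σ₁,σ∞⟩` is transitive, then the `g` with `2 - 2g = c(σ₀)+c(σ₁)+c(σ∞) - d`
satisfies `g ≥ 0`, i.e. `c(σ₀)+c(σ₁)+c(σ∞) ≤ d + 2`. -/
theorem hypermap_genus_nonneg
    (d : ℕ) (hd : 1 ≤ d) (σ₀ σ₁ σinf : Equiv.Perm (Fin d))
    (hprod : σ₀ * σ₁ * σinf = 1)
    (htrans : ∀ i j : Fin d, ∃ π ∈ Subgroup.closure ({σ₀, σ₁, σinf} :
      Set (Equiv.Perm (Fin d))), π i = j) :
    (∀ g : ℤ, 2 - 2 * g =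
        (cyclesCount σ₀ : ℤ) + cyclesCount σ₁ + cyclesCount σinf - d → 0 ≤ g) ∧
      cyclesCount σ₀ + cyclesCount σ₁ + cyclesCount σinf ≤ d + 2 := by
  have hinv : σinf = (σ₀ * σ₁)⁻¹ := by
    rw [← one_mul σinf, ← inv_mul_cancel (σ₀ * σ₁), mul_assoc, hprod, mul_one]
  -- the inverse has the same cycles
  have hnCinv : nC σinf = nC (σ₀ * σ₁) := by
    apply nCl_congr
    intro x y
    rw [hinv]
    show (σ₀ * σ₁)⁻¹.SameCycle x y ↔ (σ₀ * σ₁).SameCycle x y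
    exact Equiv.Perm.sameCycle_inv
  -- the subgroup generated by σ₀, σ₁ is transitive
  have hclo : Subgroup.closure ({σ₀, σ₁, σinf} : Set (Equiv.Perm (Fin d))) ≤
      Subgroup.closure {σ₀, σ₁} := by
    rw [Subgroup.closure_le]
    rintro g (rfl | rfl | rfl)
    · exact Subgroup.subset_closure (Set.mem_insert _ _)
    · exact Subgroup.subset_closure (Set.mem_insert_of_mem _ rfl)
    · rw [hinv]
      exact SetLike.mem_coe.2 (inv_mem (mul_mem
        (Subgroup.subset_closure (Set.mem_insert _ _))
        (Subgroup.subset_closure (Set.mem_insert_of_mem _ rfl))))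
  have horb : nOrb ({σ₀, σ₁} : Set (Equiv.Perm (Fin d))) = 1 := by
    rw [nOrb, nCl, Nat.card_eq_one_iff_unique]
    constructor
    · constructor
      rintro ⟨x⟩ ⟨y⟩
      apply Quotient.sound
      obtain ⟨π, hπ, hπxy⟩ := htrans x y
      exact ⟨π, hclo hπ, hπxy⟩
    · exact ⟨Quotient.mk _ ⟨0, hd⟩⟩
  have hmain := main_ind d σ₀ σ₁ (Nat.le_add_left d (nC σ₁))
  rw [horb] at hmain
  have key : cyclesCount σ₀ + cyclesCount σ₁ + cyclesCount σinf ≤ d + 2 := by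
    rw [cyclesCount_eq_nC, cyclesCount_eq_nC, cyclesCount_eq_nC, hnCinv]
    omega
  refine ⟨fun g hg => ?_, key⟩
  have h2 : ((cyclesCount σ₀ : ℤ) + cyclesCount σ₁ + cyclesCount σinf) ≤ (d : ℤ) + 2 := by
    exact_mod_cast key
  omega
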